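/- arXiv:2212.03751 — 4 statements merged into one kernel-verified Lean document; each statement's English description precedes it below -/
import Mathlib

section
/- Let N ≥ 1, τ ∈ (0,∞], and let a_j, c_j : [0,τ) → ℂ (1 ≤ j ≤ N) with each c_j differentiable, such that for all t ∈ [0,τ) and all j ≠ k one has sinh(π(a_j(t) − a_k(t))/(2δ)) ≠ 0 and the equations c_j' = 2i·Σ_{k≠j} (c_j − c_k)·V(a_j − a_k) hold. Then the sum Σ_{j=1}^N c_j(t) is constant on [0,τ), i.e. Σ_{j=1}^N c_j(t) = Σ_{j=1}^N c_j(0) for all t ∈ [0,τ). -/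
open MeasureTheory Filter Finset ComplexConjugate

noncomputable section

/-- `α(z) = (π/(2δ)) coth(πz/(2δ))`. -/
def cmAlpha (δ : ℝ) (z : ℂ) : ℂ :=
  ((Real.pi / (2 * δ) : ℝ) : ℂ) *
    (Complex.cosh ((Real.pi : ℂ) * z / (2 * (δ : ℂ))) /
     Complex.sinh ((Real.pi : ℂ) * z / (2 * (δ : ℂ))))

/-- `V(z) = (π/(2δ))² / sinh(πz/(2δ))²`. -/
def cmV (δ : ℝ) (z : ℂ) : ℂ :=
  ((Real.pi / (2 * δ) : ℝ) : ℂ) ^ 2 / Complex.sinh ((Real.pi : ℂ) * z / (2 * (δ : ℂ))) ^ 2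

/-- `V'(z) = -2 (π/(2δ))³ cosh(πz/(2δ)) / sinh(πz/(2δ))³`. -/
def cmV' (δ : ℝ) (z : ℂ) : ℂ :=
  -2 * ((Real.pi / (2 * δ) : ℝ) : ℂ) ^ 3 *
    Complex.cosh ((Real.pi : ℂ) * z / (2 * (δ : ℂ))) /
    Complex.sinh ((Real.pi : ℂ) * z / (2 * (δ : ℂ))) ^ 3

/-- real hyperbolic cotangent -/
def rcoth (y : ℝ) : ℝ := Real.cosh y / Real.sinh y

/-- `(T g)(x) = L`: the principal-value limit defining the operator `T` exists and equals `L`. -/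
def HasPV (δ : ℝ) (g : ℝ → ℂ) (x : ℝ) (L : ℂ) : Prop :=
  Tendsto (fun ε : ℝ =>
      (1 / (2 * (δ : ℂ))) *
        ∫ x' in {x' : ℝ | ε ≤ |x' - x|},
          ((rcoth (Real.pi * (x' - x) / (2 * δ)) : ℝ) : ℂ) * g x')
    (nhdsWithin 0 (Set.Ioi 0)) (nhds L)

/-- kernel of the operator `T̃`. -/
def TtKer (δ : ℝ) (x x' : ℝ) : ℝ := Real.tanh (Real.pi * (x' - x) / (2 * δ))

/-- the operator `T̃`. -/
def Ttilde (δ : ℝ) (g : ℝ → ℂ) (x : ℝ) : ℂ :=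
  (1 / (2 * (δ : ℂ))) * ∫ x', ((TtKer δ x x' : ℝ) : ℂ) * g x'

/-- `x' ↦ ∂_{x'} |w(x',t)|²`. -/
def sqAbsDeriv (w : ℝ → ℝ → ℂ) (t x' : ℝ) : ℝ :=
  deriv (fun y => ‖w y t‖ ^ 2) x'

/-- The intermediate mixed Manakov (IMM) system holds for the pair `(u,v)` at the point `(x,t)`,
including existence of the relevant principal-value limits and integrals. -/
def IMMat (δ : ℝ) (u v : ℝ → ℝ → ℂ) (x t : ℝ) : Prop :=
  ∃ Tu Tv : ℂ,
    HasPV δ (fun x' => ((sqAbsDeriv u t x' : ℝ) : ℂ)) x Tu ∧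
    HasPV δ (fun x' => ((sqAbsDeriv v t x' : ℝ) : ℂ)) x Tv ∧
    Integrable (fun x' => ((TtKer δ x x' : ℝ) : ℂ) * ((sqAbsDeriv u t x' : ℝ) : ℂ)) ∧
    Integrable (fun x' => ((TtKer δ x x' : ℝ) : ℂ) * ((sqAbsDeriv v t x' : ℝ) : ℂ)) ∧
    Complex.I * deriv (fun s => u x s) t =
      deriv (fun y => deriv (fun z => u z t) y) x
        + u x t * (Complex.I * ((sqAbsDeriv u t x : ℝ) : ℂ) + Tu)
        - u x t * Ttilde δ (fun x' => ((sqAbsDeriv v t x' : ℝ) : ℂ)) x ∧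
    Complex.I * deriv (fun s => v x s) t =
      deriv (fun y => deriv (fun z => v z t) y) x
        + v x t * (Complex.I * ((sqAbsDeriv v t x : ℝ) : ℂ) - Tv)
        + v x t * Ttilde δ (fun x' => ((sqAbsDeriv u t x' : ℝ) : ℂ)) x

/-- the time interval `[0, τ)` for `τ ∈ (0, ∞]`. -/
def timeDom (τ : ENNReal) : Set ℝ := {t : ℝ | 0 ≤ t ∧ ENNReal.ofReal t < τ}

/-- the sum of the residues is conserved under the linear ODEs. -/
theorem imm_sum_c_conserved
    (δ : ℝ) (hδ : 0 < δ) (N : ℕ) (hN : 1 ≤ N)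
    (τ : ENNReal) (hτ : 0 < τ)
    (a c : Fin N → ℝ → ℂ)
    (hsinh : ∀ t ∈ timeDom τ, ∀ j k : Fin N, j ≠ k →
      Complex.sinh ((Real.pi : ℂ) * (a j t - a k t) / (2 * (δ : ℂ))) ≠ 0)
    (hc : ∀ j, ∀ t ∈ timeDom τ, HasDerivWithinAt (c j)
      (2 * Complex.I * ∑ k ∈ univ.erase j, (c j t - c k t) * cmV δ (a j t - a k t))
      (timeDom τ) t) :
    ∀ t ∈ timeDom τ, ∑ j, c j t = ∑ j, c j 0 := by
  -- `cmV` is even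
  have hVeven : ∀ z : ℂ, cmV δ (-z) = cmV δ z := by
    intro z
    simp [cmV, mul_neg, neg_div, Complex.sinh_neg, neg_sq]
  -- the double sum vanishes by antisymmetry
  have hzero : ∀ s : ℝ,
      (∑ j, 2 * Complex.I *
        ∑ k ∈ univ.erase j, (c j s - c k s) * cmV δ (a j s - a k s)) = 0 := by
    intro s
    have hswap : (∑ j, ∑ k ∈ univ.erase j, (c j s - c k s) * cmV δ (a j s - a k s))
        = ∑ k, ∑ j ∈ univ.erase k, (c j s - c k s) * cmV δ (a j s - a k s) :=
      Finset.sum_comm' (by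
        intro j k
        simp [Finset.mem_erase, and_comm, ne_comm, eq_comm])
    have hneg : (∑ k : Fin N, ∑ j ∈ univ.erase k, (c j s - c k s) * cmV δ (a j s - a k s))
        = -∑ j, ∑ k ∈ univ.erase j, (c j s - c k s) * cmV δ (a j s - a k s) := by
      rw [← Finset.sum_neg_distrib]
      refine Finset.sum_congr rfl fun j _ => ?_
      rw [← Finset.sum_neg_distrib]
      refine Finset.sum_congr rfl fun k _ => ?_
      have h1 : a k s - a j s = -(a j s - a k s) := by ring
      rw [h1, hVeven]
      ring
    have hS : (∑ j, ∑ k ∈ univ.erase j, (c j s - c k s) * cmV δ (a j s - a k s)) = 0 := by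
      have h := hswap.trans hneg
      linear_combination h / 2
    rw [← Finset.mul_sum, hS, mul_zero]
  -- the time domain is convex
  have hconv : Convex ℝ (timeDom τ) := by
    intro x hx y hy p q hp hq hpq
    refine ⟨by simp only [smul_eq_mul]; nlinarith [hx.1, hy.1], ?_⟩
    have hle : p • x + q • y ≤ max x y := by
      simp only [smul_eq_mul]
      calc p * x + q * y ≤ p * max x y + q * max x y := by
            gcongr <;> [exact le_max_left x y; exact le_max_right x y]
        _ = max x y := by rw [← add_mul, hpq, one_mul]
    calc ENNReal.ofReal (p • x + q • y) ≤ ENNReal.ofReal (max x y) :=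
          ENNReal.ofReal_le_ofReal hle
      _ = max (ENNReal.ofReal x) (ENNReal.ofReal y) :=
          Monotone.map_max (fun _ _ h => ENNReal.ofReal_le_ofReal h)
      _ < τ := max_lt hx.2 hy.2
  -- the sum has zero derivative within the domain
  have hderiv : ∀ s ∈ timeDom τ,
      HasDerivWithinAt (fun r => ∑ j, c j r) 0 (timeDom τ) s := by
    intro s hs
    have := HasDerivWithinAt.fun_sum (u := (univ : Finset (Fin N)))
      (fun j _ => hc j s hs)
    rwa [hzero s] at this
  -- zero time is in the domain
  have h0 : (0 : ℝ) ∈ timeDom τ := ⟨le_refl 0, by simpa using hτ⟩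
  intro t ht
  have hb := Convex.norm_image_sub_le_of_norm_hasDerivWithin_le
    (f := fun r => ∑ j, c j r) (f' := fun _ => 0) (C := 0)
    hderiv (fun x _ => by simp) hconv h0 ht
  rw [zero_mul] at hb
  have : ‖(∑ j, c j t) - ∑ j, c j 0‖ = 0 := le_antisymm hb (norm_nonneg _)
  have := norm_eq_zero.mp this
  exact sub_eq_zero.mp this
end
end

section
/- Let N ≥ 1, τ ∈ (0,∞], λ ∈ ℝ, and let a_j, c_j : [0,τ) → ℂ (1 ≤ j ≤ N) be differentiable functions satisfying at every t ∈ [0,τ): the linear equations c_j' = 2i·Σ_{k≠j} (c_j − c_k)·V(a_j − a_k), the Bäcklund relations c_j·a_j' = 2λ + 2i·Σ_{k≠j} c_k·α(a_j − a_k), the strip condition −3δ/2 < Im a_j(t) < −δ/2 (all j), and the distinctness condition a_j(t) ≠ a_k(t) (all j ≠ k). Define D_j(t) := c_j(t)·(λ − i·Σ_{k=1}^N conj(c_k(t))·α(a_j(t) − conj(a_k(t)) + iδ)). Then each D_j is differentiable on [0,τ) and satisfies the closed linear system D_j' = 2i·Σ_{k≠j} (D_j − D_k)·V(a_j − a_k)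 − 2i·Σ_{k=1}^N (D_j − conj(D_k))·V(a_j − conj(a_k) + iδ) for j = 1,…,N. -/
open MeasureTheory Filter Finset ComplexConjugate

noncomputable section

/-- the quantity `D_j(t)` associated with the constraints. -/
def Dfun (δ : ℝ) (lam : ℝ) {N : ℕ} (a c : Fin N → ℝ → ℂ) (j : Fin N) (t : ℝ) : ℂ :=
  c j t * ((lam : ℂ) - Complex.I * ∑ k, conj (c k t) *
    cmAlpha δ (a j t - conj (a k t) + Complex.I * (δ : ℂ)))


section AuxiliaryCM
open Complex Finset
variable {δ : ℝ}



lemma cmAlpha_zero : cmAlpha δ 0 = 0 := by simp [cmAlpha]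
lemma cmV_zero : cmV δ 0 = 0 := by simp [cmV]
lemma cmAlpha_neg (z : ℂ) : cmAlpha δ (-z) = -cmAlpha δ z := by
  simp [cmAlpha, mul_neg, neg_div, Complex.cosh_neg, Complex.sinh_neg, div_neg, mul_comm]
lemma cmV_neg (z : ℂ) : cmV δ (-z) = cmV δ z := by
  simp [cmV, mul_neg, neg_div, Complex.sinh_neg]
lemma conj_cmAlpha (z : ℂ) : (starRingEnd ℂ) (cmAlpha δ z) = cmAlpha δ ((starRingEnd ℂ) z) := by
  simp only [cmAlpha, map_mul, map_div₀, Complex.conj_ofReal, ← Complex.cosh_conj,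
    ← Complex.sinh_conj, map_ofNat]
lemma conj_cmV (z : ℂ) : (starRingEnd ℂ) (cmV δ z) = cmV δ ((starRingEnd ℂ) z) := by
  simp only [cmV, map_div₀, map_pow, map_mul, Complex.conj_ofReal, ← Complex.sinh_conj, map_ofNat]

lemma sinh_arg_ne_zero (hδ : 0 < δ) {z : ℂ} (h1 : |z.im| < 2 * δ) (h2 : z ≠ 0) :
    Complex.sinh ((Real.pi : ℂ) * z / (2 * (δ : ℂ))) ≠ 0 := by
  intro h
  have hδ' : (2 * (δ:ℂ)) ≠ 0 := by
    intro hco; apply hδ.ne'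
    have := congrArg Complex.re hco
    simpa using this
  have hπ : (Real.pi : ℂ) ≠ 0 := by
    simpa using Real.pi_ne_zero
  have hs : Complex.sin (((Real.pi : ℂ) * z / (2 * (δ : ℂ))) * Complex.I) = 0 := by
    rw [Complex.sin_mul_I, h, zero_mul]
  rw [Complex.sin_eq_zero_iff] at hs
  obtain ⟨k, hk⟩ := hs
  have h1' : (Real.pi:ℂ) * z * Complex.I = (k:ℂ) * (Real.pi:ℂ) * (2*(δ:ℂ)) := by
    field_simp at hk
    rw [div_eq_iff (by exact_mod_cast hδ.ne' : (δ:ℂ) ≠ 0)] at hk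
    linear_combination (Real.pi:ℂ) * hk
  have hz : z = ((-(2*δ)*(k:ℝ) : ℝ) : ℂ) * Complex.I := by
    apply mul_left_cancel₀ hπ
    push_cast
    linear_combination (-Complex.I) * h1' + ((Real.pi:ℂ)*z) * Complex.I_sq
  have him : z.im = -(2*δ)*(k:ℝ) := by rw [hz]; simp
  rw [him] at h1
  have hk0 : k = 0 := by
    by_contra hk0
    have h1le : (1:ℝ) ≤ |(k:ℝ)| := by exact_mod_cast Int.one_le_abs hk0
    rw [abs_mul, abs_neg, abs_of_pos (by positivity : (0:ℝ) < 2*δ)] at h1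
    nlinarith
  apply h2
  rw [hz, hk0]
  simp

lemma two_delta_ne (hδ : 0 < δ) : (2 * (δ:ℂ)) ≠ 0 := by
  intro hco; apply hδ.ne'; simpa using congrArg Complex.re hco

lemma hasDerivAt_cmAlpha (hδ : 0 < δ) {z : ℂ}
    (hz : Complex.sinh ((Real.pi : ℂ) * z / (2 * (δ : ℂ))) ≠ 0) :
    HasDerivAt (cmAlpha δ) (-cmV δ z) z := by
  have hδ' := two_delta_ne hδ
  have hlin : HasDerivAt (fun w : ℂ => (Real.pi : ℂ) * w / (2 * (δ : ℂ)))
      ((Real.pi : ℂ) / (2 * (δ : ℂ))) z := by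
    have h := (hasDerivAt_id z).const_mul ((Real.pi:ℂ)/(2*(δ:ℂ)))
    have heq : (fun w : ℂ => (Real.pi:ℂ)*w/(2*(δ:ℂ)))
        = fun y => ((Real.pi:ℂ)/(2*(δ:ℂ)))*y := by funext w; ring
    rw [heq]; simpa using h
  have hcosh : HasDerivAt (fun w : ℂ => Complex.cosh ((Real.pi : ℂ) * w / (2 * (δ : ℂ))))
      (Complex.sinh ((Real.pi : ℂ) * z / (2 * (δ : ℂ))) * ((Real.pi : ℂ) / (2 * (δ : ℂ)))) z :=
    (Complex.hasDerivAt_cosh _).comp z hlin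
  have hsinh : HasDerivAt (fun w : ℂ => Complex.sinh ((Real.pi : ℂ) * w / (2 * (δ : ℂ))))
      (Complex.cosh ((Real.pi : ℂ) * z / (2 * (δ : ℂ))) * ((Real.pi : ℂ) / (2 * (δ : ℂ)))) z :=
    (Complex.hasDerivAt_sinh _).comp z hlin
  have hdiv := (hcosh.div hsinh hz).const_mul ((Real.pi / (2 * δ) : ℝ) : ℂ)
  refine (hdiv : HasDerivAt (cmAlpha δ) _ z).congr_deriv ?_
  symm
  have hpyth := Complex.cosh_sq_sub_sinh_sq ((Real.pi : ℂ) * z / (2 * (δ : ℂ)))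
  have hcast : ((Real.pi / (2 * δ) : ℝ) : ℂ) = (Real.pi : ℂ) / (2 * (δ:ℂ)) := by push_cast; ring
  rw [cmV, hcast]
  set S := Complex.sinh ((Real.pi : ℂ) * z / (2 * (δ : ℂ))) with hS
  set C := Complex.cosh ((Real.pi : ℂ) * z / (2 * (δ : ℂ))) with hC
  field_simp
  linear_combination (1/(δ:ℂ)^2) * hpyth

lemma keyB (hδ : 0 < δ) {x y : ℂ}
    (hx : Complex.sinh ((Real.pi : ℂ) * x / (2 * (δ : ℂ))) ≠ 0)
    (hy : Complex.sinh ((Real.pi : ℂ) * y / (2 * (δ : ℂ))) ≠ 0)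
    (hxy : Complex.sinh ((Real.pi : ℂ) * (x - y) / (2 * (δ : ℂ))) ≠ 0) :
    cmV δ (x - y) * (cmAlpha δ x - cmAlpha δ y)
      + cmV δ x * (cmAlpha δ (x - y) + cmAlpha δ y) = 0 := by
  have hδ' : (2 * (δ:ℂ)) ≠ 0 := by
    intro hco; apply hδ.ne'; simpa using congrArg Complex.re hco
  have hcast : ((Real.pi / (2 * δ) : ℝ) : ℂ) = (Real.pi : ℂ) / (2 * (δ:ℂ)) := by push_cast; ring
  have harg : (Real.pi : ℂ) * (x - y) / (2 * (δ : ℂ))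
      = (Real.pi : ℂ) * x / (2 * (δ : ℂ)) - (Real.pi : ℂ) * y / (2 * (δ : ℂ)) := by ring
  rw [cmV, cmV, cmAlpha, cmAlpha, cmAlpha, hcast, harg, Complex.sinh_sub, Complex.cosh_sub]
  set Sx := Complex.sinh ((Real.pi : ℂ) * x / (2 * (δ : ℂ))) with hSx
  set Cx := Complex.cosh ((Real.pi : ℂ) * x / (2 * (δ : ℂ))) with hCx
  set Sy := Complex.sinh ((Real.pi : ℂ) * y / (2 * (δ : ℂ))) with hSy
  set Cy := Complex.cosh ((Real.pi : ℂ) * y / (2 * (δ : ℂ))) with hCy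
  rw [harg, Complex.sinh_sub] at hxy
  have px := Complex.cosh_sq_sub_sinh_sq ((Real.pi : ℂ) * x / (2 * (δ : ℂ)))
  have py := Complex.cosh_sq_sub_sinh_sq ((Real.pi : ℂ) * y / (2 * (δ : ℂ)))
  rw [← hSx, ← hCx] at px
  rw [← hSy, ← hCy] at py
  have hxy' : Sx * Cy - Cx * Sy ≠ 0 := hxy
  field_simp
  ring_nf
  linear_combination ((Real.pi:ℂ)^3 * Sx * (Sx * Cy - Cx * Sy) / (δ:ℂ)^3) * py

lemma keyA (hδ : 0 < δ) {x y : ℂ}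
    (hx : Complex.sinh ((Real.pi : ℂ) * x / (2 * (δ : ℂ))) ≠ 0)
    (hy : Complex.sinh ((Real.pi : ℂ) * y / (2 * (δ : ℂ))) ≠ 0)
    (hxy : Complex.sinh ((Real.pi : ℂ) * (x - y) / (2 * (δ : ℂ))) ≠ 0) :
    cmV δ (x - y) * (cmAlpha δ x - cmAlpha δ y)
      + cmV δ y * (cmAlpha δ (x - y) - cmAlpha δ x) = 0 := by
  have h1 := keyB hδ hx hy hxy
  have hy' : Complex.sinh ((Real.pi : ℂ) * (x - (x - y)) / (2 * (δ : ℂ))) ≠ 0 := by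
    rw [sub_sub_cancel]; exact hy
  have h2 := keyB hδ hx hxy hy'
  rw [sub_sub_cancel] at h2
  linear_combination h1 - h2

lemma pullc {N : ℕ} (c : ℂ) (f : Fin N → ℂ) : ∑ k, c * f k = c * ∑ k, f k :=
  (Finset.mul_sum _ _ _).symm

lemma main_alg {N : ℕ} (j : Fin N) (lam : ℂ)
    (cc dd g : Fin N → ℂ) (x : ℂ) (y : Fin N → ℂ)
    (A V B W Ab Vb : Fin N → Fin N → ℂ)
    (hAdiag : A j j = 0)
    (hVbdiag : ∀ k, Vb k k = 0)
    (hAbdiag : ∀ k, Ab k k = 0)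
    (hVbsymm : ∀ k m, Vb k m = Vb m k)
    (hkey1 : ∀ k m, k ≠ m → Vb k m * (B j m - B j k) + W j k * (Ab k m - B j m) = 0)
    (hkey2 : ∀ k m, m ≠ j → W j k * A j m + V j m * (B j k - B m k) + W j k * B m k = 0)
    (hB1 : cc j * x = 2*lam + 2*Complex.I*∑ m, cc m * A j m)
    (hB2 : ∀ k, dd k * y k = 2*lam - 2*Complex.I*∑ m, dd m * Ab k m)
    (hg : ∀ k, g k = -(2*Complex.I)*∑ m, (dd k - dd m) * Vb k m) :
    (2*Complex.I*∑ k, (cc j - cc k) * V j k) * (lam - Complex.I*∑ k, dd k * B j k)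
    + cc j * (0 - Complex.I * ∑ k, (g k * B j k + dd k * (-(W j k) * (x - y k)))) =
    2*Complex.I*∑ k, ((cc j * (lam - Complex.I*∑ m, dd m * B j m)
        - cc k * (lam - Complex.I*∑ m, dd m * B k m)) * V j k)
    - 2*Complex.I*∑ k, ((cc j * (lam - Complex.I*∑ m, dd m * B j m)
        - dd k * (lam - Complex.I*∑ m, cc m * B m k)) * W j k) := by
  -- LHS inner sum expansion
  have hL1 : ∑ k, (g k * B j k + dd k * (-(W j k) * (x - y k)))
      = -(2*Complex.I) * ∑ k, ∑ m, ((dd k - dd m) * Vb k m * B j k)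
        - (∑ k, W j k * dd k) * x + ∑ k, (W j k * (dd k * y k)) := by
    rw [Finset.mul_sum, Finset.sum_mul, ← Finset.sum_sub_distrib, ← Finset.sum_add_distrib]
    refine Finset.sum_congr rfl fun k _ => ?_
    rw [hg k, mul_assoc, Finset.sum_mul, Finset.mul_sum]
    ring
  have hL2 : ∑ k, ∑ m, ((dd k - dd m) * Vb k m * B j k)
      = (∑ k, ∑ m, (dd k * Vb k m * B j k)) - ∑ k, ∑ m, (dd m * Vb k m * B j k) := by
    rw [← Finset.sum_sub_distrib]
    refine Finset.sum_congr rfl fun k _ => ?_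
    rw [← Finset.sum_sub_distrib]
    exact Finset.sum_congr rfl fun m _ => by ring
  have hL3 : ∑ k, (W j k * (dd k * y k))
      = 2*lam*(∑ k, W j k) - (2*Complex.I)*∑ k, ∑ m, (W j k * (dd m * Ab k m)) := by
    rw [Finset.mul_sum, Finset.mul_sum, ← Finset.sum_sub_distrib]
    refine Finset.sum_congr rfl fun k _ => ?_
    rw [hB2 k, ← Finset.mul_sum]
    ring
  -- target sum expansions
  have hT1 : ∑ k, ((cc j * (lam - Complex.I*∑ m, dd m * B j m)
        - cc k * (lam - Complex.I*∑ m, dd m * B k m)) * V j k)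
      = lam * ∑ k, ((cc j - cc k) * V j k)
        - Complex.I * (cc j * ((∑ m, dd m * B j m) * ∑ k, V j k))
        + Complex.I * ∑ k, (cc k * V j k * ∑ m, dd m * B k m) := by
    rw [show ∑ k, ((cc j * (lam - Complex.I*∑ m, dd m * B j m)
        - cc k * (lam - Complex.I*∑ m, dd m * B k m)) * V j k)
      = ∑ k, (lam * ((cc j - cc k) * V j k)
        - Complex.I * (cc j * ((∑ m, dd m * B j m) * V j k))
        + Complex.I * (cc k * V j k * ∑ m, dd m * B k m)) from
      Finset.sum_congr rfl fun k _ => by ring]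
    rw [Finset.sum_add_distrib, Finset.sum_sub_distrib, pullc, pullc, pullc, pullc, pullc]
  have hT2 : ∑ k, ((cc j * (lam - Complex.I*∑ m, dd m * B j m)
        - dd k * (lam - Complex.I*∑ m, cc m * B m k)) * W j k)
      = lam * (cc j * ∑ k, W j k)
        - Complex.I * (cc j * ((∑ m, dd m * B j m) * ∑ k, W j k))
        - lam * ∑ k, (W j k * dd k)
        + Complex.I * ∑ k, (W j k * dd k * ∑ m, cc m * B m k) := by
    rw [show ∑ k, ((cc j * (lam - Complex.I*∑ m, dd m * B j m)
        - dd k * (lam - Complex.I*∑ m, cc m * B m k)) * W j k)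
      = ∑ k, (lam * (cc j * W j k)
        - Complex.I * (cc j * ((∑ m, dd m * B j m) * W j k))
        - lam * (W j k * dd k)
        + Complex.I * (W j k * dd k * ∑ m, cc m * B m k)) from
      Finset.sum_congr rfl fun k _ => by ring]
    rw [Finset.sum_add_distrib, Finset.sum_sub_distrib, Finset.sum_sub_distrib,
      pullc, pullc, pullc, pullc, pullc, pullc, pullc]
  -- bridges: single-with-inner-sum to double sums
  have hbr6 : ∑ k, (cc k * V j k * ∑ m, dd m * B k m)
      = ∑ k, ∑ m, (cc k * V j k * (dd m * B k m)) :=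
    Finset.sum_congr rfl fun k _ => Finset.mul_sum _ _ _
  have hbr7 : ∑ k, (W j k * dd k * ∑ m, cc m * B m k)
      = ∑ k, ∑ m, (W j k * dd k * (cc m * B m k)) :=
    Finset.sum_congr rfl fun k _ => Finset.mul_sum _ _ _
  -- products of sums to double sums
  have hD1 : (∑ k, cc k * V j k) * (∑ k, dd k * B j k)
      = ∑ k, ∑ m, (cc k * V j k * (dd m * B j m)) := Finset.sum_mul_sum _ _ _ _
  have hD8 : (∑ k, W j k) * (∑ k, dd k * B j k)
      = ∑ k, ∑ m, (W j k * (dd m * B j m)) := Finset.sum_mul_sum _ _ _ _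
  have hD4 : (∑ k, W j k * dd k) * (∑ m, cc m * A j m)
      = ∑ k, ∑ m, (W j k * dd k * (cc m * A j m)) := Finset.sum_mul_sum _ _ _ _
  have hP : ∑ k, ((cc j - cc k) * V j k) = cc j * (∑ k, V j k) - ∑ k, (cc k * V j k) := by
    rw [Finset.mul_sum, ← Finset.sum_sub_distrib]
    exact Finset.sum_congr rfl fun k _ => by ring
  -- swaps
  have hc1 : ∑ k, ∑ m, (dd m * Vb k m * B j m) = ∑ k, ∑ m, (dd k * Vb k m * B j k) := by
    rw [Finset.sum_comm]
    exact Finset.sum_congr rfl fun k _ => Finset.sum_congr rfl fun m _ => by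
      rw [hVbsymm k m]
  have hc2 : ∑ k, ∑ m, (cc k * V j k * (dd m * B j m))
      = ∑ k, ∑ m, (dd k * cc m * (V j m * B j k)) := by
    rw [Finset.sum_comm]
    exact Finset.sum_congr rfl fun k _ => Finset.sum_congr rfl fun m _ => by ring
  have hc3 : ∑ k, ∑ m, (cc k * V j k * (dd m * B k m))
      = ∑ k, ∑ m, (dd k * cc m * (V j m * B m k)) := by
    rw [Finset.sum_comm]
    exact Finset.sum_congr rfl fun k _ => Finset.sum_congr rfl fun m _ => by ring
  -- key termwise sums
  have hA1 : ∑ k, ∑ m, (dd m * (Vb k m * (B j m - B j k) + W j k * (Ab k m - B j m)))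
      = -∑ k, (dd k * (W j k * B j k)) := by
    rw [← Finset.sum_neg_distrib]
    refine Finset.sum_congr rfl fun k _ => ?_
    rw [Finset.sum_eq_single k (fun m _ hm => by rw [hkey1 k m (Ne.symm hm), mul_zero])
      (fun h => absurd (Finset.mem_univ k) h)]
    rw [hVbdiag k, hAbdiag k]
    ring
  have hA2 : ∑ k, ∑ m, (dd k * cc m * (W j k * A j m + V j m * (B j k - B m k) + W j k * B m k))
      = cc j * ∑ k, (dd k * (W j k * B j k)) := by
    rw [Finset.mul_sum]
    refine Finset.sum_congr rfl fun k _ => ?_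
    rw [Finset.sum_eq_single j (fun m _ hm => by rw [hkey2 k m hm, mul_zero])
      (fun h => absurd (Finset.mem_univ j) h)]
    rw [hAdiag]
    ring
  -- expansions of the key sums into canonical double sums
  have hE1 : ∑ k, ∑ m, (dd m * (Vb k m * (B j m - B j k) + W j k * (Ab k m - B j m)))
      = ∑ k, ∑ m, (dd m * Vb k m * B j m) - ∑ k, ∑ m, (dd m * Vb k m * B j k)
        + (∑ k, ∑ m, (W j k * (dd m * Ab k m)) - ∑ k, ∑ m, (W j k * (dd m * B j m))) := by
    rw [← Finset.sum_sub_distrib, ← Finset.sum_sub_distrib, ← Finset.sum_add_distrib]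
    refine Finset.sum_congr rfl fun k _ => ?_
    rw [← Finset.sum_sub_distrib, ← Finset.sum_sub_distrib, ← Finset.sum_add_distrib]
    exact Finset.sum_congr rfl fun m _ => by ring
  have hE2 : ∑ k, ∑ m, (dd k * cc m * (W j k * A j m + V j m * (B j k - B m k) + W j k * B m k))
      = ∑ k, ∑ m, (W j k * dd k * (cc m * A j m))
        + (∑ k, ∑ m, (dd k * cc m * (V j m * B j k)) - ∑ k, ∑ m, (dd k * cc m * (V j m * B m k)))
        + ∑ k, ∑ m, (W j k * dd k * (cc m * B m k)) := by
    rw [← Finset.sum_sub_distrib, ← Finset.sum_add_distrib, ← Finset.sum_add_distrib]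
    refine Finset.sum_congr rfl fun k _ => ?_
    rw [← Finset.sum_sub_distrib, ← Finset.sum_add_distrib, ← Finset.sum_add_distrib]
    exact Finset.sum_congr rfl fun m _ => by ring
  -- combined key identities
  have hKey1 : ∑ k, ∑ m, (dd k * Vb k m * B j k) - ∑ k, ∑ m, (dd m * Vb k m * B j k)
        + (∑ k, ∑ m, (W j k * (dd m * Ab k m)) - ∑ k, ∑ m, (W j k * (dd m * B j m)))
      = -∑ k, (dd k * (W j k * B j k)) := by
    rw [← hc1, ← hE1]
    exact hA1
  have hKey2 : ∑ k, ∑ m, (W j k * dd k * (cc m * A j m))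
        + (∑ k, ∑ m, (dd k * cc m * (V j m * B j k)) - ∑ k, ∑ m, (dd k * cc m * (V j m * B m k)))
        + ∑ k, ∑ m, (W j k * dd k * (cc m * B m k))
      = cc j * ∑ k, (dd k * (W j k * B j k)) := by
    rw [← hE2]
    exact hA2
  -- final assembly
  have hT1d : ∑ k, ((cc j * (lam - Complex.I*∑ m, dd m * B j m)
        - cc k * (lam - Complex.I*∑ m, dd m * B k m)) * V j k)
      = lam * ∑ k, ((cc j - cc k) * V j k)
        - Complex.I * (cc j * ((∑ m, dd m * B j m) * ∑ k, V j k))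
        + Complex.I * ∑ k, ∑ m, (cc k * V j k * (dd m * B k m)) := by
    rw [hT1, hbr6]
  have hT2d : ∑ k, ((cc j * (lam - Complex.I*∑ m, dd m * B j m)
        - dd k * (lam - Complex.I*∑ m, cc m * B m k)) * W j k)
      = lam * (cc j * ∑ k, W j k)
        - Complex.I * (cc j * ((∑ m, dd m * B j m) * ∑ k, W j k))
        - lam * ∑ k, (W j k * dd k)
        + Complex.I * ∑ k, ∑ m, (W j k * dd k * (cc m * B m k)) := by
    rw [hT2, hbr7]
  rw [hT1d, hT2d, hL1, hL2, hL3]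
  rw [hc2] at hD1
  linear_combination (Complex.I*(∑ k, W j k * dd k))*hB1
    + (Complex.I^2) * ((-2*(∑ k, dd k * B j k))*hP + 2*hD1 + (-2*cc j)*hD8 + 2*hD4
        + (2*cc j)*hKey1 + 2*hKey2 + (-2)*hc3)

end AuxiliaryCM

set_option maxHeartbeats 1600000

/-- the constraint quantities `D_j` are differentiable and satisfy a closed linear
system of ODEs. -/
theorem imm_Dj_linear_system
    (δ : ℝ) (hδ : 0 < δ) (N : ℕ) (hN : 1 ≤ N)
    (τ : ENNReal) (hτ : 0 < τ) (lam : ℝ)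
    (a a' c : Fin N → ℝ → ℂ)
    (ha' : ∀ j, ∀ t ∈ timeDom τ, HasDerivWithinAt (a j) (a' j t) (timeDom τ) t)
    (hc : ∀ j, ∀ t ∈ timeDom τ, HasDerivWithinAt (c j)
      (2 * Complex.I * ∑ k ∈ univ.erase j, (c j t - c k t) * cmV δ (a j t - a k t))
      (timeDom τ) t)
    (hB : ∀ j, ∀ t ∈ timeDom τ, c j t * a' j t =
      2 * (lam : ℂ) + 2 * Complex.I * ∑ k ∈ univ.erase j, c k t * cmAlpha δ (a j t - a k t))
    (hstrip : ∀ t ∈ timeDom τ, ∀ j, -(3 * δ) / 2 < (a j t).im ∧ (a j t).im < -δ / 2)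
    (hdist : ∀ t ∈ timeDom τ, ∀ j k, j ≠ k → a j t ≠ a k t) :
    ∀ j, ∀ t ∈ timeDom τ,
      HasDerivWithinAt (Dfun δ lam a c j)
        (2 * Complex.I * ∑ k ∈ univ.erase j,
            (Dfun δ lam a c j t - Dfun δ lam a c k t) * cmV δ (a j t - a k t)
          - 2 * Complex.I * ∑ k,
            (Dfun δ lam a c j t - conj (Dfun δ lam a c k t)) *
              cmV δ (a j t - conj (a k t) + Complex.I * (δ : ℂ)))
        (timeDom τ) t := by
  intro j t ht
  have hsj := hstrip t ht
  -- nonvanishing facts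
  have hWne : ∀ p q : Fin N,
      Complex.sinh ((Real.pi:ℂ) * (a p t - conj (a q t) + Complex.I * (δ:ℂ)) / (2*(δ:ℂ))) ≠ 0 := by
    intro p q
    have him : (a p t - conj (a q t) + Complex.I * (δ:ℂ)).im = (a p t).im + (a q t).im + δ := by
      simp [Complex.add_im, Complex.sub_im, Complex.conj_im, Complex.mul_im]
    apply sinh_arg_ne_zero hδ
    · rw [him, abs_lt]
      have h1 := (hsj p).1; have h2 := (hsj p).2
      have h3 := (hsj q).1; have h4 := (hsj q).2
      constructor <;> linarith
    · intro h0
      rw [h0] at him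
      simp only [Complex.zero_im] at him
      have h2 := (hsj p).2; have h4 := (hsj q).2
      linarith
  have hVne : ∀ p q : Fin N, p ≠ q →
      Complex.sinh ((Real.pi:ℂ) * (a p t - a q t) / (2*(δ:ℂ))) ≠ 0 := by
    intro p q hpq
    have him : (a p t - a q t).im = (a p t).im - (a q t).im := by
      simp [Complex.sub_im]
    apply sinh_arg_ne_zero hδ
    · rw [him, abs_lt]
      have h1 := (hsj p).1; have h2 := (hsj p).2
      have h3 := (hsj q).1; have h4 := (hsj q).2
      constructor <;> linarith
    · exact sub_ne_zero.mpr (hdist t ht p q hpq)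
  have hVbne : ∀ p q : Fin N, p ≠ q →
      Complex.sinh ((Real.pi:ℂ) * (conj (a p t) - conj (a q t)) / (2*(δ:ℂ))) ≠ 0 := by
    intro p q hpq
    have him : ((starRingEnd ℂ) (a p t) - (starRingEnd ℂ) (a q t)).im
        = -(a p t).im + (a q t).im := by
      simp [Complex.sub_im, Complex.conj_im]
    apply sinh_arg_ne_zero hδ
    · rw [him, abs_lt]
      have h1 := (hsj p).1; have h2 := (hsj p).2
      have h3 := (hsj q).1; have h4 := (hsj q).2
      constructor <;> linarith
    · refine sub_ne_zero.mpr ?_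
      intro hco
      exact hdist t ht p q hpq ((starRingEnd ℂ).injective hco)
  -- key identities
  have hkey1i : ∀ k m : Fin N, k ≠ m →
      cmV δ (conj (a k t) - conj (a m t)) *
          (cmAlpha δ (a j t - conj (a m t) + Complex.I * (δ:ℂ))
            - cmAlpha δ (a j t - conj (a k t) + Complex.I * (δ:ℂ)))
        + cmV δ (a j t - conj (a k t) + Complex.I * (δ:ℂ)) *
          (cmAlpha δ (conj (a k t) - conj (a m t))
            - cmAlpha δ (a j t - conj (a m t) + Complex.I * (δ:ℂ))) = 0 := by
    intro k m hkm
    have heq : (a j t - conj (a m t) + Complex.I * (δ:ℂ))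
        - (a j t - conj (a k t) + Complex.I * (δ:ℂ)) = conj (a k t) - conj (a m t) := by ring
    have hxy : Complex.sinh ((Real.pi:ℂ) * ((a j t - conj (a m t) + Complex.I * (δ:ℂ))
        - (a j t - conj (a k t) + Complex.I * (δ:ℂ))) / (2*(δ:ℂ))) ≠ 0 := by
      rw [heq]; exact hVbne k m hkm
    have h := keyA hδ (hWne j m) (hWne j k) hxy
    rw [heq] at h
    exact h
  have hkey2i : ∀ k m : Fin N, m ≠ j →
      cmV δ (a j t - conj (a k t) + Complex.I * (δ:ℂ)) * cmAlpha δ (a j t - a m t)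
        + cmV δ (a j t - a m t) *
            (cmAlpha δ (a j t - conj (a k t) + Complex.I * (δ:ℂ))
              - cmAlpha δ (a m t - conj (a k t) + Complex.I * (δ:ℂ)))
        + cmV δ (a j t - conj (a k t) + Complex.I * (δ:ℂ)) *
            cmAlpha δ (a m t - conj (a k t) + Complex.I * (δ:ℂ)) = 0 := by
    intro k m hm
    have heq : (a j t - conj (a k t) + Complex.I * (δ:ℂ))
        - (a m t - conj (a k t) + Complex.I * (δ:ℂ)) = a j t - a m t := by ring
    have hxy : Complex.sinh ((Real.pi:ℂ) * ((a j t - conj (a k t) + Complex.I * (δ:ℂ))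
        - (a m t - conj (a k t) + Complex.I * (δ:ℂ))) / (2*(δ:ℂ))) ≠ 0 := by
      rw [heq]; exact hVne j m (Ne.symm hm)
    have h := keyB hδ (hWne j k) (hWne m k) hxy
    rw [heq] at h
    linear_combination h
  -- Bäcklund relations in univ form
  have hB1i : c j t * a' j t
      = 2*((lam:ℝ):ℂ) + 2*Complex.I*∑ m, c m t * cmAlpha δ (a j t - a m t) := by
    rw [hB j t ht, Finset.sum_erase _ (by rw [sub_self, cmAlpha_zero, mul_zero])]
  have hB2i : ∀ k, conj (c k t) * conj (a' k t)
      = 2*((lam:ℝ):ℂ) - 2*Complex.I*∑ m, conj (c m t) *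
          cmAlpha δ (conj (a k t) - conj (a m t)) := by
    intro k
    have h := congrArg (starRingEnd ℂ) (hB k t ht)
    simp only [map_mul, map_add, map_sum, map_sub, map_ofNat, Complex.conj_I,
      Complex.conj_ofReal, conj_cmAlpha] at h
    rw [h, Finset.sum_erase _ (by rw [sub_self, cmAlpha_zero, mul_zero])]
    ring
  have hgi : ∀ k, (starRingEnd ℂ)
        (2 * Complex.I * ∑ m ∈ univ.erase k, (c k t - c m t) * cmV δ (a k t - a m t))
      = -(2*Complex.I)*∑ m, (conj (c k t) - conj (c m t)) *
          cmV δ (conj (a k t) - conj (a m t)) := by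
    intro k
    simp only [map_mul, map_sum, map_sub, map_ofNat, Complex.conj_I, conj_cmV]
    rw [Finset.sum_erase _ (by rw [sub_self, sub_self, zero_mul])]
    ring
  -- derivative construction
  have hconj' : ∀ (f : ℝ → ℂ) (f' : ℂ), HasDerivWithinAt f f' (timeDom τ) t →
      HasDerivWithinAt (fun u => (starRingEnd ℂ) (f u)) ((starRingEnd ℂ) f') (timeDom τ) t := by
    intro f f' hf
    exact hf.star
  have hterm : ∀ k : Fin N, HasDerivWithinAt
      (fun s => conj (c k s) * cmAlpha δ (a j s - conj (a k s) + Complex.I * (δ:ℂ)))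
      ((starRingEnd ℂ)
          (2 * Complex.I * ∑ m ∈ univ.erase k, (c k t - c m t) * cmV δ (a k t - a m t))
          * cmAlpha δ (a j t - conj (a k t) + Complex.I * (δ:ℂ))
        + conj (c k t) * (-cmV δ (a j t - conj (a k t) + Complex.I * (δ:ℂ))
            * (a' j t - (starRingEnd ℂ) (a' k t)))) (timeDom τ) t := by
    intro k
    have hin : HasDerivWithinAt (fun s => a j s - conj (a k s) + Complex.I * (δ:ℂ))
        (a' j t - (starRingEnd ℂ) (a' k t)) (timeDom τ) t :=
      (((ha' j t ht).sub (hconj' _ _ (ha' k t ht))).add_const _)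
    have halpha : HasDerivWithinAt
        (fun s => cmAlpha δ (a j s - conj (a k s) + Complex.I * (δ:ℂ)))
        (-cmV δ (a j t - conj (a k t) + Complex.I * (δ:ℂ))
          * (a' j t - (starRingEnd ℂ) (a' k t))) (timeDom τ) t :=
      HasDerivAt.comp_hasDerivWithinAt (h₂ := cmAlpha δ) t (hasDerivAt_cmAlpha hδ (hWne j k)) hin
    exact (hconj' _ _ (hc k t ht)).mul halpha
  have hip : HasDerivWithinAt
      (fun s => ((lam:ℝ):ℂ) - Complex.I * ∑ k, conj (c k s) *
          cmAlpha δ (a j s - conj (a k s) + Complex.I * (δ:ℂ)))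
      (0 - Complex.I * ∑ k, ((starRingEnd ℂ)
          (2 * Complex.I * ∑ m ∈ univ.erase k, (c k t - c m t) * cmV δ (a k t - a m t))
          * cmAlpha δ (a j t - conj (a k t) + Complex.I * (δ:ℂ))
        + conj (c k t) * (-cmV δ (a j t - conj (a k t) + Complex.I * (δ:ℂ))
            * (a' j t - (starRingEnd ℂ) (a' k t))))) (timeDom τ) t :=
    (hasDerivWithinAt_const t _ _).sub
      ((HasDerivWithinAt.fun_sum fun k _ => hterm k).const_mul Complex.I)
  have hDd : HasDerivWithinAt (Dfun δ lam a c j)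
      ((2 * Complex.I * ∑ k ∈ univ.erase j, (c j t - c k t) * cmV δ (a j t - a k t))
          * (((lam:ℝ):ℂ) - Complex.I * ∑ k, conj (c k t) *
              cmAlpha δ (a j t - conj (a k t) + Complex.I * (δ:ℂ)))
        + c j t * (0 - Complex.I * ∑ k, ((starRingEnd ℂ)
            (2 * Complex.I * ∑ m ∈ univ.erase k, (c k t - c m t) * cmV δ (a k t - a m t))
            * cmAlpha δ (a j t - conj (a k t) + Complex.I * (δ:ℂ))
          + conj (c k t) * (-cmV δ (a j t - conj (a k t) + Complex.I * (δ:ℂ))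
              * (a' j t - (starRingEnd ℂ) (a' k t)))))) (timeDom τ) t :=
    (hc j t ht).mul hip
  -- the algebraic identity
  have hmain := main_alg (N := N) j ((lam:ℝ):ℂ)
    (fun k => c k t) (fun k => conj (c k t))
    (fun k => (starRingEnd ℂ)
      (2 * Complex.I * ∑ m ∈ univ.erase k, (c k t - c m t) * cmV δ (a k t - a m t)))
    (a' j t) (fun k => conj (a' k t))
    (fun p q => cmAlpha δ (a p t - a q t))
    (fun p q => cmV δ (a p t - a q t))
    (fun p q => cmAlpha δ (a p t - conj (a q t) + Complex.I * (δ:ℂ)))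
    (fun p q => cmV δ (a p t - conj (a q t) + Complex.I * (δ:ℂ)))
    (fun p q => cmAlpha δ (conj (a p t) - conj (a q t)))
    (fun p q => cmV δ (conj (a p t) - conj (a q t)))
    (by show cmAlpha δ (a j t - a j t) = 0; rw [sub_self]; exact cmAlpha_zero)
    (fun k => by show cmV δ (conj (a k t) - conj (a k t)) = 0; rw [sub_self]; exact cmV_zero)
    (fun k => by
      show cmAlpha δ (conj (a k t) - conj (a k t)) = 0
      rw [sub_self]; exact cmAlpha_zero)
    (fun k m => by
      show cmV δ (conj (a k t) - conj (a m t)) = cmV δ (conj (a m t) - conj (a k t))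
      rw [show conj (a k t) - conj (a m t) = -(conj (a m t) - conj (a k t)) from
        by ring, cmV_neg])
    hkey1i hkey2i hB1i hB2i hgi
  beta_reduce at hmain
  -- erase → univ for the first factor
  have hext1 : ∑ k ∈ univ.erase j, (c j t - c k t) * cmV δ (a j t - a k t)
      = ∑ k, (c j t - c k t) * cmV δ (a j t - a k t) :=
    Finset.sum_erase _ (by rw [sub_self, zero_mul])
  rw [hext1] at hDd
  -- conj of Dfun
  have hconjD : ∀ k, conj (Dfun δ lam a c k t)
      = conj (c k t) * (((lam:ℝ):ℂ) - Complex.I * ∑ m, c m t *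
          cmAlpha δ (a m t - conj (a k t) + Complex.I * (δ:ℂ))) := by
    intro k
    simp only [Dfun, map_mul, map_sub, map_add, map_sum, Complex.conj_I,
      Complex.conj_ofReal, Complex.conj_conj, conj_cmAlpha]
    rw [show ∑ m, c m t * cmAlpha δ ((starRingEnd ℂ) (a k t) - a m t
        + -Complex.I * (δ:ℂ))
      = ∑ m, c m t * -cmAlpha δ (a m t - (starRingEnd ℂ) (a k t) + Complex.I * (δ:ℂ)) from
      Finset.sum_congr rfl fun m _ => by
        rw [show (starRingEnd ℂ) (a k t) - a m t + -Complex.I * (δ:ℂ)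
          = -(a m t - (starRingEnd ℂ) (a k t) + Complex.I * (δ:ℂ)) from by ring, cmAlpha_neg]]
    simp only [mul_neg, Finset.sum_neg_distrib]
    ring
  -- rewrite the target
  have htarget : 2 * Complex.I * ∑ k ∈ univ.erase j,
        (Dfun δ lam a c j t - Dfun δ lam a c k t) * cmV δ (a j t - a k t)
      - 2 * Complex.I * ∑ k,
        (Dfun δ lam a c j t - conj (Dfun δ lam a c k t)) *
          cmV δ (a j t - conj (a k t) + Complex.I * (δ:ℂ))
      = 2*Complex.I*∑ k, ((c j t * (((lam:ℝ):ℂ) - Complex.I*∑ m, conj (c m t) *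
            cmAlpha δ (a j t - conj (a m t) + Complex.I * (δ:ℂ)))
          - c k t * (((lam:ℝ):ℂ) - Complex.I*∑ m, conj (c m t) *
            cmAlpha δ (a k t - conj (a m t) + Complex.I * (δ:ℂ)))) * cmV δ (a j t - a k t))
      - 2*Complex.I*∑ k, ((c j t * (((lam:ℝ):ℂ) - Complex.I*∑ m, conj (c m t) *
            cmAlpha δ (a j t - conj (a m t) + Complex.I * (δ:ℂ)))
          - conj (c k t) * (((lam:ℝ):ℂ) - Complex.I*∑ m, c m t *
            cmAlpha δ (a m t - conj (a k t) + Complex.I * (δ:ℂ))))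
          * cmV δ (a j t - conj (a k t) + Complex.I * (δ:ℂ))) := by
    have hext2 : ∑ k ∈ univ.erase j,
          (Dfun δ lam a c j t - Dfun δ lam a c k t) * cmV δ (a j t - a k t)
        = ∑ k, (Dfun δ lam a c j t - Dfun δ lam a c k t) * cmV δ (a j t - a k t) :=
      Finset.sum_erase _ (by rw [sub_self, zero_mul])
    have hs1 : ∑ k, (Dfun δ lam a c j t - Dfun δ lam a c k t) * cmV δ (a j t - a k t)
        = ∑ k, ((c j t * (((lam:ℝ):ℂ) - Complex.I*∑ m, conj (c m t) *
              cmAlpha δ (a j t - conj (a m t) + Complex.I * (δ:ℂ)))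
            - c k t * (((lam:ℝ):ℂ) - Complex.I*∑ m, conj (c m t) *
              cmAlpha δ (a k t - conj (a m t) + Complex.I * (δ:ℂ)))) * cmV δ (a j t - a k t)) :=
      Finset.sum_congr rfl fun k _ => by simp only [Dfun]
    have hs2 : ∑ k, (Dfun δ lam a c j t - conj (Dfun δ lam a c k t)) *
            cmV δ (a j t - conj (a k t) + Complex.I * (δ:ℂ))
        = ∑ k, ((c j t * (((lam:ℝ):ℂ) - Complex.I*∑ m, conj (c m t) *
              cmAlpha δ (a j t - conj (a m t) + Complex.I * (δ:ℂ)))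
            - conj (c k t) * (((lam:ℝ):ℂ) - Complex.I*∑ m, c m t *
              cmAlpha δ (a m t - conj (a k t) + Complex.I * (δ:ℂ))))
            * cmV δ (a j t - conj (a k t) + Complex.I * (δ:ℂ))) :=
      Finset.sum_congr rfl fun k _ => by rw [hconjD k]; simp only [Dfun]
    rw [hext2, hs1, hs2]
  rw [htarget, ← hmain]
  exact hDd
end
end

section
/- Let p, q ∈ ℂ be such that sinh(πp/(2δ)) ≠ 0, sinh(πq/(2δ)) ≠ 0, and sinh(π(p−q)/(2δ)) ≠ 0. Then α(p)·V(q) + α(q)·V(p) = α(q−p)·(V(p) − V(q)). -/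
open MeasureTheory Filter Finset ComplexConjugate

noncomputable section

/-- functional identity relating `α` and `V`. -/
theorem cmAlpha_cmV_identity
    (δ : ℝ) (hδ : 0 < δ) (p q : ℂ)
    (hp : Complex.sinh ((Real.pi : ℂ) * p / (2 * (δ : ℂ))) ≠ 0)
    (hq : Complex.sinh ((Real.pi : ℂ) * q / (2 * (δ : ℂ))) ≠ 0)
    (hpq : Complex.sinh ((Real.pi : ℂ) * (p - q) / (2 * (δ : ℂ))) ≠ 0) :
    cmAlpha δ p * cmV δ q + cmAlpha δ q * cmV δ p =
      cmAlpha δ (q - p) * (cmV δ p - cmV δ q) := by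
  unfold cmAlpha cmV
  set a := (Real.pi : ℂ) * p / (2 * (δ : ℂ)) with ha
  set b := (Real.pi : ℂ) * q / (2 * (δ : ℂ)) with hb
  have hab : (Real.pi : ℂ) * (q - p) / (2 * (δ : ℂ)) = b - a := by rw [ha, hb]; ring
  have hab' : (Real.pi : ℂ) * (p - q) / (2 * (δ : ℂ)) = a - b := by rw [ha, hb]; ring
  rw [hab]
  rw [hab'] at hpq
  have hba : Complex.sinh (b - a) ≠ 0 := by
    rw [show b - a = -(a-b) by ring, Complex.sinh_neg, neg_ne_zero]; exact hpq
  have key : Complex.cosh a * Complex.sinh a * Complex.sinh (b-a)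
      + Complex.cosh b * Complex.sinh b * Complex.sinh (b-a)
      = Complex.cosh (b-a) * (Complex.sinh b ^ 2 - Complex.sinh a ^ 2) := by
    rw [Complex.sinh_sub, Complex.cosh_sub]
    linear_combination (Complex.sinh a * Complex.sinh b) * Complex.cosh_sq a -
      (Complex.sinh a * Complex.sinh b) * Complex.cosh_sq b
  have hδ' : (δ : ℂ) ≠ 0 := by exact_mod_cast hδ.ne'
  push_cast
  field_simp [hp, hq, hba, hδ']
  linear_combination key
end
end

section
/- Let λ ∈ ℝ with λ ≠ 0, and let a₁, a₂, c₁, c₂ ∈ ℂ satisfy the strip condition −3δ/2 < Im a_j < −δ/2 (j = 1,2), Im c₁ ≠ 0, and the two constraints c₁·(λ − i·conj(c₁)·α(a₁ − conj(a₁) + iδ) − i·conj(c₂)·α(a₁ − conj(a₂) + iδ)) + 1 = 0 and c₂·(λ − i·conj(c₁)·α(a₂ − conj(a₁) + iδ) − i·conj(c₂)·α(a₂ − conj(a₂) + iδ)) + 1 = 0. Then d := c₁ + c₂ is real (i.e. Im(c₁ + c₂) = 0), and λ = −Re(c₁·(conj(c₁) − d)·α(a₁ − conj(a₂) + iδ))/Im(c₁).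 -/
open MeasureTheory Filter Finset ComplexConjugate

noncomputable section

lemma cmAlpha_conj (δ : ℝ) (z : ℂ) : conj (cmAlpha δ z) = - cmAlpha δ (- conj z) := by
  unfold cmAlpha
  rw [map_mul, map_div₀, Complex.conj_ofReal, ← Complex.cosh_conj, ← Complex.sinh_conj]
  have : conj ((Real.pi : ℂ) * z / (2 * (δ : ℂ))) = -((Real.pi : ℂ) * (-conj z) / (2 * (δ : ℂ))) := by
    simp only [map_div₀, map_mul, Complex.conj_ofReal, map_ofNat]
    ring
  rw [this, Complex.cosh_neg, Complex.sinh_neg, div_neg, mul_neg]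

lemma cmAlpha_conj' (δ : ℝ) (a b : ℂ) :
    conj (cmAlpha δ (a - conj b + Complex.I * (δ : ℂ))) =
      - cmAlpha δ (b - conj a + Complex.I * (δ : ℂ)) := by
  rw [cmAlpha_conj]
  congr 2
  simp only [map_add, map_sub, map_mul, Complex.conj_conj, Complex.conj_I, Complex.conj_ofReal]
  ring

/-- structure of solutions of the two-soliton constraints. -/
theorem imm_two_soliton_constraints
    (δ : ℝ) (hδ : 0 < δ) (lam : ℝ) (hlam : lam ≠ 0)
    (a₁ a₂ c₁ c₂ : ℂ)
    (hstrip1 : -(3 * δ) / 2 < a₁.im ∧ a₁.im < -δ / 2)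
    (hstrip2 : -(3 * δ) / 2 < a₂.im ∧ a₂.im < -δ / 2)
    (hc1 : c₁.im ≠ 0)
    (hC1 : c₁ * ((lam : ℂ) - Complex.I * conj c₁ * cmAlpha δ (a₁ - conj a₁ + Complex.I * (δ : ℂ))
      - Complex.I * conj c₂ * cmAlpha δ (a₁ - conj a₂ + Complex.I * (δ : ℂ))) + 1 = 0)
    (hC2 : c₂ * ((lam : ℂ) - Complex.I * conj c₁ * cmAlpha δ (a₂ - conj a₁ + Complex.I * (δ : ℂ))
      - Complex.I * conj c₂ * cmAlpha δ (a₂ - conj a₂ + Complex.I * (δ : ℂ))) + 1 = 0) :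
    (c₁ + c₂).im = 0 ∧
    lam = -(c₁ * (conj c₁ - (c₁ + c₂)) *
      cmAlpha δ (a₁ - conj a₂ + Complex.I * (δ : ℂ))).re / c₁.im := by
  set A11 := cmAlpha δ (a₁ - conj a₁ + Complex.I * (δ : ℂ)) with hA11
  set A12 := cmAlpha δ (a₁ - conj a₂ + Complex.I * (δ : ℂ)) with hA12
  set A21 := cmAlpha δ (a₂ - conj a₁ + Complex.I * (δ : ℂ)) with hA21
  set A22 := cmAlpha δ (a₂ - conj a₂ + Complex.I * (δ : ℂ)) with hA22
  have h11 : conj A11 = -A11 := cmAlpha_conj' δ a₁ a₁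
  have h12 : conj A12 = -A21 := cmAlpha_conj' δ a₁ a₂
  have h21 : conj A21 = -A12 := cmAlpha_conj' δ a₂ a₁
  have h22 : conj A22 = -A22 := cmAlpha_conj' δ a₂ a₂
  -- conjugated constraints
  have hC1' : conj c₁ * ((lam : ℂ) - Complex.I * c₁ * A11 - Complex.I * c₂ * A21) + 1 = 0 := by
    have := congrArg conj hC1
    simp only [map_add, map_mul, map_sub, map_one, map_zero, Complex.conj_conj,
      Complex.conj_I, Complex.conj_ofReal, h11, h12] at this
    linear_combination this
  have hC2' : conj c₂ * ((lam : ℂ) - Complex.I * c₁ * A12 - Complex.I * c₂ * A22) + 1 = 0 := by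
    have := congrArg conj hC2
    simp only [map_add, map_mul, map_sub, map_one, map_zero, Complex.conj_conj,
      Complex.conj_I, Complex.conj_ofReal, h21, h22] at this
    linear_combination this
  have him : (lam : ℂ) * ((c₁ + c₂) - conj (c₁ + c₂)) = 0 := by
    simp only [map_add]
    linear_combination hC1 - hC1' + hC2 - hC2'
  have hsum : conj (c₁ + c₂) = c₁ + c₂ := by
    rcases mul_eq_zero.mp him with h | h
    · exact absurd (Complex.ofReal_eq_zero.mp h) hlam
    · exact (sub_eq_zero.mp h).symm
  refine ⟨Complex.conj_eq_iff_im.mp hsum, ?_⟩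
  have hd : conj c₂ = c₁ + c₂ - conj c₁ := by
    rw [map_add] at hsum; linear_combination hsum
  set w := c₁ * conj c₂ * A12 with hwdef
  have e1 : (lam : ℂ) * (c₁ - conj c₁) = Complex.I * (w - conj c₁ * c₂ * A21) := by
    linear_combination hC1 - hC1'
  have hw : conj w = -(conj c₁ * c₂ * A21) := by
    rw [hwdef, map_mul, map_mul, Complex.conj_conj, h12]; ring
  have h1 : c₁ - conj c₁ = 2 * (c₁.im : ℂ) * Complex.I := by
    rw [Complex.sub_conj]; push_cast; ring
  have h2 : w + conj w = 2 * (w.re : ℂ) := by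
    rw [Complex.add_conj]; push_cast; ring
  have e2 : ((lam * (2 * c₁.im) : ℝ) : ℂ) = ((2 * w.re : ℝ) : ℂ) := by
    apply mul_right_cancel₀ Complex.I_ne_zero
    push_cast
    linear_combination -(lam : ℂ) * h1 + e1 - Complex.I * hw + Complex.I * h2
  have e3 : lam * c₁.im = w.re := by
    have := Complex.ofReal_inj.mp e2
    linarith
  have hwe : c₁ * (conj c₁ - (c₁ + c₂)) * A12 = -w := by
    rw [hwdef]; linear_combination c₁ * A12 * hd
  rw [hwe, Complex.neg_re, neg_neg]
  field_simp
  linarith [e3]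
end
end
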